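/- With sin_q(z) = sum_{n≥0} (-1)^n q^(n^2) z^(2n+1)/[2n+1]_q! and cos_q(z) = sum_{n≥0} (-1)^n q^(n^2) z^(2n)/[2n]_q! over Q(q), the coefficient of z^(2n+1) in sin_q(z)·cos_{1/q}(z) equals (-1)^n q^(n(n-1)/2) / [2n+1]_q! · prod_{i=1}^{n} (1+q^i)^2. -/

import Mathlib

noncomputable section
open Finset PowerSeries

abbrev Fq : Type := RatFunc ℚ

/-- The variable `q` as element of the field of rational functions `ℚ(q)`. -/
def qv : Fq := RatFunc.X

/-- The q-integer `[m]_q = 1 + q + ... + q^(m-1)`. -/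
def qInt (x : Fq) (m : ℕ) : Fq := ∑ i ∈ Finset.range m, x ^ i

/-- The q-factorial `[m]_q! = [1]_q [2]_q ⋯ [m]_q`. -/
def qFact (x : Fq) (m : ℕ) : Fq := ∏ i ∈ Finset.range m, qInt x (i + 1)

/-- `sin_q(z) = ∑ (-1)^n q^(n^2) z^(2n+1)/[2n+1]_q!`. -/
def qsin (x : Fq) : PowerSeries Fq :=
  PowerSeries.mk fun m =>
    if m % 2 = 1 then (-1 : Fq) ^ (m / 2) * x ^ ((m / 2) ^ 2) / qFact x m else 0

/-- `cos_q(z) = ∑ (-1)^n q^(n^2) z^(2n)/[2n]_q!`. -/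
def qcos (x : Fq) : PowerSeries Fq :=
  PowerSeries.mk fun m =>
    if m % 2 = 0 then (-1 : Fq) ^ (m / 2) * x ^ ((m / 2) ^ 2) / qFact x m else 0

lemma qv_ne_zero : qv ≠ 0 := RatFunc.X_ne_zero

lemma qInt_ne_zero {m : ℕ} (hm : 0 < m) : qInt qv m ≠ 0 := by
  have : qInt qv m = algebraMap (Polynomial ℚ) Fq (∑ i ∈ range m, Polynomial.X ^ i) := by
    rw [qInt, map_sum]
    refine Finset.sum_congr rfl fun i _ => ?_
    rw [map_pow, RatFunc.algebraMap_X, qv]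
  rw [this]
  apply RatFunc.algebraMap_ne_zero
  intro h
  have h1 : (Polynomial.eval 1 (∑ i ∈ range m, (Polynomial.X : Polynomial ℚ) ^ i)) = m := by
    simp [Polynomial.eval_finset_sum]
  rw [h] at h1
  simp at h1
  exact hm.ne' (by exact_mod_cast h1.symm)

lemma qFact_ne_zero (m : ℕ) : qFact qv m ≠ 0 := by
  apply Finset.prod_ne_zero_iff.mpr
  intro i _
  exact qInt_ne_zero (Nat.succ_pos i)

def qB (m k : ℕ) : Fq := qFact qv m / (qFact qv k * qFact qv (m - k))

lemma qB_zero (m : ℕ) : qB m 0 = 1 := by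
  simp [qB, qFact, div_self (qFact_ne_zero m)]
  exact qFact_ne_zero m

lemma qB_self (m : ℕ) : qB m m = 1 := by
  simp [qB, Nat.sub_self]
  rw [show qFact qv 0 = 1 by simp [qFact]]
  rw [mul_one]
  exact div_self (qFact_ne_zero m)

lemma qInt_split (a b : ℕ) : qInt qv (a + b) = qInt qv a + qv ^ a * qInt qv b := by
  rw [qInt, qInt, qInt, Finset.sum_range_add, Finset.mul_sum]
  congr 1
  refine Finset.sum_congr rfl fun i _ => ?_
  rw [pow_add]

lemma qPascal (m k : ℕ) (h : k < m) :
    qB (m + 1) (k + 1) = qv ^ (k + 1) * qB m (k + 1) + qB m k := by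
  have hmk : m + 1 - (k + 1) = m - k := by omega
  have hmk1 : m - (k + 1) = m - k - 1 := by omega
  have hsplit : qInt qv (m + 1) = qInt qv (k + 1) + qv ^ (k + 1) * qInt qv (m - k) := by
    have : m + 1 = (k + 1) + (m - k) := by omega
    rw [this, qInt_split]
  have hf1 : qFact qv (m + 1) = qFact qv m * qInt qv (m + 1) := Finset.prod_range_succ _ _
  have hf2 : qFact qv (k + 1) = qFact qv k * qInt qv (k + 1) := Finset.prod_range_succ _ _
  have hf3 : qFact qv (m - k) = qFact qv (m - k - 1) * qInt qv (m - k) := by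
    have : m - k = (m - k - 1) + 1 := by omega
    rw [this]; exact Finset.prod_range_succ _ _
  rw [qB, qB, qB, hmk, hmk1, hf1, hf2, hf3, hsplit]
  have n1 := qFact_ne_zero m
  have n2 := qFact_ne_zero k
  have n3 := qFact_ne_zero (m - k - 1)
  have n4 : qInt qv (k + 1) ≠ 0 := qInt_ne_zero (Nat.succ_pos k)
  have n5 : qInt qv (m - k) ≠ 0 := qInt_ne_zero (by omega)
  field_simp
  ring

lemma tri_succ (k : ℕ) : k * (k + 1) / 2 = k * (k - 1) / 2 + k := by
  have h : k * (k + 1) = k * (k - 1) + k * 2 := by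
    cases k with
    | zero => rfl
    | succ j => simp only [Nat.add_sub_cancel]; ring
  rw [h, Nat.add_mul_div_right _ _ (by norm_num : (0:ℕ) < 2)]

lemma tri_shift (k : ℕ) : (k + 1) * (k + 1 - 1) / 2 = k * (k + 1) / 2 := by
  rw [Nat.add_sub_cancel, mul_comm]

def ff (m : ℕ) (t : Fq) : Fq := ∑ k ∈ range (m + 1), qv ^ (k * (k - 1) / 2) * t ^ k * qB m k

lemma ff_succ (m : ℕ) (t : Fq) : ff (m + 1) t = (1 + t) * ff m (qv * t) := by
  have expand : (1 + t) * ff m (qv * t) =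
      (∑ k ∈ range (m + 1), qv ^ (k * (k - 1) / 2) * qv ^ k * t ^ k * qB m k) +
      (∑ k ∈ range (m + 1), qv ^ (k * (k + 1) / 2) * t ^ (k + 1) * qB m k) := by
    rw [ff, add_mul, one_mul, Finset.mul_sum]
    congr 1
    · refine Finset.sum_congr rfl fun k _ => ?_
      rw [mul_pow]; ring
    · refine Finset.sum_congr rfl fun k _ => ?_
      rw [mul_pow, tri_succ, pow_add, pow_succ]; ring
  rw [expand, ff]
  rw [Finset.sum_range_succ (fun k => qv ^ (k * (k - 1) / 2) * t ^ k * qB (m + 1) k),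
      Finset.sum_range_succ' (fun k => qv ^ (k * (k - 1) / 2) * t ^ k * qB (m + 1) k),
      Finset.sum_range_succ' (fun k => qv ^ (k * (k - 1) / 2) * qv ^ k * t ^ k * qB m k),
      Finset.sum_range_succ (fun k => qv ^ (k * (k + 1) / 2) * t ^ (k + 1) * qB m k)]
  simp only [qB_zero, qB_self]
  have hmain : ∀ k ∈ range m,
      qv ^ ((k + 1) * (k + 1 - 1) / 2) * t ^ (k + 1) * qB (m + 1) (k + 1) =
      qv ^ ((k + 1) * (k + 1 - 1) / 2) * qv ^ (k + 1) * t ^ (k + 1) * qB m (k + 1) +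
      qv ^ (k * (k + 1) / 2) * t ^ (k + 1) * qB m k := by
    intro k hk
    rw [qPascal m k (Finset.mem_range.mp hk), tri_shift]
    ring
  rw [Finset.sum_congr rfl hmain, Finset.sum_add_distrib, tri_shift m]
  simp only [pow_zero, mul_one, one_mul]
  ring

lemma ff_eq (m : ℕ) : ∀ t : Fq, ff m t = ∏ i ∈ range m, (1 + qv ^ i * t) := by
  induction m with
  | zero => intro t; simp [ff, qB_zero]
  | succ m ih =>
    intro t
    rw [ff_succ, ih (qv * t), Finset.prod_range_succ' (fun i => 1 + qv ^ i * t)]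
    simp only [pow_zero, one_mul]
    rw [mul_comm]
    congr 1
    refine Finset.prod_congr rfl fun i _ => ?_
    rw [pow_succ]
    ring

lemma sum_range_two_mul (m : ℕ) (g : ℕ → Fq) :
    ∑ k ∈ range (2 * m), g k = ∑ j ∈ range m, (g (2 * j) + g (2 * j + 1)) := by
  induction m with
  | zero => simp
  | succ m ih =>
    rw [Finset.sum_range_succ, ← ih, show 2 * (m + 1) = 2 * m + 1 + 1 by ring,
        Finset.sum_range_succ, Finset.sum_range_succ]
    ring

lemma qInt_inv (m : ℕ) : qInt qv⁻¹ m * qv ^ (m - 1) = qInt qv m := by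
  rw [qInt, qInt, Finset.sum_mul]
  rw [← Finset.sum_range_reflect (fun i => qv ^ i) m]
  refine Finset.sum_congr rfl fun i hi => ?_
  have hi' : i < m := Finset.mem_range.mp hi
  rw [inv_pow, inv_mul_eq_div, div_eq_iff (pow_ne_zero i qv_ne_zero), ← pow_add]
  congr 1
  omega

lemma qFact_inv (m : ℕ) : qFact qv⁻¹ m * qv ^ (∑ i ∈ range m, i) = qFact qv m := by
  induction m with
  | zero => simp [qFact]
  | succ m ih =>
    have h1 : qFact qv⁻¹ (m + 1) = qFact qv⁻¹ m * qInt qv⁻¹ (m + 1) := Finset.prod_range_succ _ _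
    have h2 : qFact qv (m + 1) = qFact qv m * qInt qv (m + 1) := Finset.prod_range_succ _ _
    have h3 := qInt_inv (m + 1)
    rw [Nat.add_sub_cancel] at h3
    rw [h1, h2, Finset.sum_range_succ, pow_add, ← ih, ← h3]
    ring

lemma ff_vanish (n : ℕ) : ff (2 * n + 1) (-(qv⁻¹ ^ n)) = 0 := by
  rw [ff_eq]
  apply Finset.prod_eq_zero (Finset.mem_range.mpr (show n < 2 * n + 1 by omega))
  rw [inv_pow, mul_neg, mul_inv_cancel₀ (pow_ne_zero n qv_ne_zero)]
  ring

lemma prod_Icc_one (n : ℕ) (h : ℕ → Fq) : ∏ i ∈ Icc 1 n, h i = ∏ i ∈ range n, h (i + 1) := by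
  induction n with
  | zero => simp
  | succ n ih => rw [Finset.prod_Icc_succ_top (by omega), ih, Finset.prod_range_succ]

lemma ff_key (n : ℕ) :
    qv ^ (∑ i ∈ range n, (n - i)) * ff (2 * n + 1) (qv⁻¹ ^ n) =
      2 * ∏ i ∈ Icc 1 n, (1 + qv ^ i) ^ 2 := by
  rw [ff_eq, inv_pow]
  rw [show 2 * n + 1 = n + (n + 1) by ring, Finset.prod_range_add]
  rw [Finset.prod_range_succ' (fun i => 1 + qv ^ (n + i) * (qv ^ n)⁻¹)]
  have hx : qv ^ n ≠ 0 := pow_ne_zero n qv_ne_zero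
  have g0 : 1 + qv ^ (n + 0) * (qv ^ n)⁻¹ = 2 := by
    rw [add_zero, mul_inv_cancel₀ hx]; norm_num
  have gright : ∀ i ∈ range n, 1 + qv ^ (n + (i + 1)) * (qv ^ n)⁻¹ = 1 + qv ^ (i + 1) := by
    intro i _
    congr 1
    rw [show n + (i + 1) = (i + 1) + n by ring, pow_add, mul_assoc, mul_inv_cancel₀ hx, mul_one]
  have gleft : qv ^ (∑ i ∈ range n, (n - i)) * ∏ i ∈ range n, (1 + qv ^ i * (qv ^ n)⁻¹) =
      ∏ i ∈ range n, (1 + qv ^ (i + 1)) := by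
    rw [← Finset.prod_pow_eq_pow_sum, ← Finset.prod_mul_distrib]
    rw [← Finset.prod_range_reflect (fun i => 1 + qv ^ (i + 1)) n]
    refine Finset.prod_congr rfl fun i hi => ?_
    have hi' : i < n := Finset.mem_range.mp hi
    rw [mul_add, mul_one, ← mul_assoc, ← pow_add, show n - i + i = n by omega,
        mul_inv_cancel₀ hx]
    rw [show n - 1 - i + 1 = n - i by omega]
    ring
  rw [Finset.prod_congr rfl gright, g0, prod_Icc_one]
  have hsq : ∏ i ∈ range n, (1 + qv ^ (i + 1)) ^ 2 =
      (∏ i ∈ range n, (1 + qv ^ (i + 1))) * ∏ i ∈ range n, (1 + qv ^ (i + 1)) := by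
    rw [← Finset.prod_mul_distrib]
    exact Finset.prod_congr rfl fun i _ => sq _
  rw [hsq]
  linear_combination (2 * ∏ i ∈ range n, (1 + qv ^ (i + 1))) * gleft

lemma qFact_inv_ne_zero (m : ℕ) : qFact qv⁻¹ m ≠ 0 := by
  intro h
  have := qFact_inv m
  rw [h, zero_mul] at this
  exact qFact_ne_zero m this.symm

lemma coeff_qsin_even (j : ℕ) : PowerSeries.coeff (R := Fq) (2 * j) (qsin qv) = 0 := by
  simp [qsin, Nat.mul_mod_right]

lemma coeff_qsin_odd (j : ℕ) :
    PowerSeries.coeff (R := Fq) (2 * j + 1) (qsin qv) = (-1) ^ j * qv ^ (j ^ 2) / qFact qv (2 * j + 1) := by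
  rw [qsin, PowerSeries.coeff_mk, if_pos (by omega : (2 * j + 1) % 2 = 1),
      (by omega : (2 * j + 1) / 2 = j)]

lemma coeff_qcos_inv (a : ℕ) :
    PowerSeries.coeff (R := Fq) (2 * a) (qcos qv⁻¹) =
      (-1) ^ a * qv ^ (a * (a - 1)) / qFact qv (2 * a) := by
  rw [qcos, PowerSeries.coeff_mk, if_pos (by omega : (2 * a) % 2 = 0),
      (by omega : (2 * a) / 2 = a)]
  have hE : (∑ i ∈ range (2 * a), i) = a ^ 2 + a * (a - 1) := by
    have h2 := Finset.sum_range_id_mul_two (2 * a)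
    have h3 : (a ^ 2 + a * (a - 1)) * 2 = (2 * a) * (2 * a - 1) := by
      cases a with
      | zero => rfl
      | succ b =>
        rw [show 2 * (b + 1) - 1 = 2 * b + 1 by omega, Nat.add_sub_cancel]; ring
    omega
  have hA := qFact_inv_ne_zero (2 * a)
  have hF := qFact_ne_zero (2 * a)
  have hq : qv ^ (a ^ 2) ≠ 0 := pow_ne_zero _ qv_ne_zero
  rw [div_eq_div_iff hA hF, ← qFact_inv (2 * a), hE, pow_add, inv_pow]
  field_simp

lemma harith (n : ℕ) : n * (n - 1) / 2 + (∑ i ∈ range n, (n - i)) = n ^ 2 := by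
  have h1 : ∑ i ∈ range n, (n - i) = ∑ i ∈ range n, (i + 1) := by
    rw [← Finset.sum_range_reflect (fun i => i + 1) n]
    refine Finset.sum_congr rfl fun i hi => ?_
    have := Finset.mem_range.mp hi
    omega
  have h2 : ∑ i ∈ range n, (i + 1) = (∑ i ∈ range n, i) + n := by
    rw [Finset.sum_add_distrib]; simp
  have h3 := Finset.sum_range_id_mul_two n
  have h4 : n ^ 2 = n * (n - 1) + n := by
    cases n with
    | zero => rfl
    | succ b => simp only [Nat.add_sub_cancel]; ring
  obtain ⟨A, hA⟩ : ∃ A, A = n * (n - 1) := ⟨_, rfl⟩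
  obtain ⟨B, hB⟩ : ∃ B, B = n ^ 2 := ⟨_, rfl⟩
  rw [← hA] at h3 h4
  rw [← hB] at h4 ⊢
  rw [h1, h2, ← hA]
  omega

lemma hexp (n j : ℕ) (hj : j ≤ n) :
    n ^ 2 + (2 * j + 1) * (2 * j) / 2 = (j ^ 2 + (n - j) * (n - j - 1)) + n * (2 * j + 1) := by
  have h1 : (2 * j + 1) * (2 * j) / 2 = j * (2 * j + 1) := by
    rw [show (2 * j + 1) * (2 * j) = j * (2 * j + 1) * 2 by ring,
        Nat.mul_div_cancel _ (by norm_num : (0:ℕ) < 2)]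
  rw [h1]
  obtain ⟨d, rfl⟩ : ∃ d, n = j + d := ⟨n - j, by omega⟩
  rw [Nat.add_sub_cancel_left]
  cases d with
  | zero => simp
  | succ e => simp only [Nat.add_sub_cancel]; ring

lemma ff_odd_part (n : ℕ) :
    ff (2 * n + 1) (qv⁻¹ ^ n) =
      2 * ∑ j ∈ range (n + 1),
        qv ^ ((2 * j + 1) * (2 * j) / 2) * (qv⁻¹ ^ n) ^ (2 * j + 1) * qB (2 * n + 1) (2 * j + 1) := by
  have h0 : ff (2 * n + 1) (qv⁻¹ ^ n) - ff (2 * n + 1) (-(qv⁻¹ ^ n)) =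
      2 * ∑ j ∈ range (n + 1),
        qv ^ ((2 * j + 1) * (2 * j) / 2) * (qv⁻¹ ^ n) ^ (2 * j + 1) * qB (2 * n + 1) (2 * j + 1) := by
    rw [ff, ff, ← Finset.sum_sub_distrib, show 2 * n + 1 + 1 = 2 * (n + 1) by ring,
        sum_range_two_mul, Finset.mul_sum]
    refine Finset.sum_congr rfl fun j _ => ?_
    have he : (-(qv⁻¹ ^ n)) ^ (2 * j) = (qv⁻¹ ^ n) ^ (2 * j) := (even_two_mul j).neg_pow _
    have ho : (-(qv⁻¹ ^ n)) ^ (2 * j + 1) = -((qv⁻¹ ^ n) ^ (2 * j + 1)) :=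
      (odd_two_mul_add_one j).neg_pow _
    rw [he, ho]
    simp only [Nat.add_sub_cancel]
    ring
  rw [ff_vanish, sub_zero] at h0
  exact h0

theorem coeff_sin_q_mul_cos_inv_q (n : ℕ) :
    PowerSeries.coeff (R := Fq) (2 * n + 1) (qsin qv * qcos qv⁻¹) =
      (-1 : Fq) ^ n * qv ^ (n * (n - 1) / 2) / qFact qv (2 * n + 1) *
        ∏ i ∈ Finset.Icc 1 n, (1 + qv ^ i) ^ 2 := by
  rw [PowerSeries.coeff_mul, Finset.Nat.sum_antidiagonal_eq_sum_range_succ_mk]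
  rw [Nat.succ_eq_add_one, show 2 * n + 1 + 1 = 2 * (n + 1) by ring, sum_range_two_mul]
  dsimp only
  have hterm : ∀ j ∈ range (n + 1),
      (PowerSeries.coeff (R := Fq) (2 * j) (qsin qv) *
          PowerSeries.coeff (R := Fq) (2 * n + 1 - 2 * j) (qcos qv⁻¹) +
        PowerSeries.coeff (R := Fq) (2 * j + 1) (qsin qv) *
          PowerSeries.coeff (R := Fq) (2 * n + 1 - (2 * j + 1)) (qcos qv⁻¹)) =
      (-1 : Fq) ^ n * (qv ^ (j ^ 2 + (n - j) * (n - j - 1)) /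
        (qFact qv (2 * j + 1) * qFact qv (2 * (n - j)))) := by
    intro j hj
    have hj' : j ≤ n := by have := Finset.mem_range.mp hj; omega
    rw [coeff_qsin_even, zero_mul, zero_add,
        show 2 * n + 1 - (2 * j + 1) = 2 * (n - j) by omega,
        coeff_qsin_odd, coeff_qcos_inv, div_mul_div_comm, ← mul_div_assoc]
    congr 1
    have hs : ((-1 : Fq)) ^ j * ((-1 : Fq)) ^ (n - j) = (-1 : Fq) ^ n := by
      rw [← pow_add]; congr 1; omega
    rw [pow_add]
    linear_combination (qv ^ (j ^ 2) * qv ^ ((n - j) * (n - j - 1))) * hs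
  rw [Finset.sum_congr rfl hterm, ← Finset.mul_sum]
  set O : Fq := ∑ j ∈ range (n + 1),
      qv ^ ((2 * j + 1) * (2 * j) / 2) * (qv⁻¹ ^ n) ^ (2 * j + 1) * qB (2 * n + 1) (2 * j + 1)
    with hOdef
  set S : Fq := ∑ j ∈ range (n + 1),
      qv ^ (j ^ 2 + (n - j) * (n - j - 1)) / (qFact qv (2 * j + 1) * qFact qv (2 * (n - j)))
    with hSdef
  set P : Fq := ∏ i ∈ Finset.Icc 1 n, (1 + qv ^ i) ^ 2 with hPdef
  have hF := qFact_ne_zero (2 * n + 1)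
  have hC2 : qv ^ (n ^ 2) * O = qFact qv (2 * n + 1) * S := by
    rw [hOdef, hSdef, Finset.mul_sum, Finset.mul_sum]
    refine Finset.sum_congr rfl fun j hj => ?_
    have hj' : j ≤ n := by have := Finset.mem_range.mp hj; omega
    rw [qB, show 2 * n + 1 - (2 * j + 1) = 2 * (n - j) by omega]
    have hu : (qv⁻¹ ^ n) ^ (2 * j + 1) = (qv ^ (n * (2 * j + 1)))⁻¹ := by
      rw [inv_pow, inv_pow, ← pow_mul]
    have hpow : qv ^ (n ^ 2) * qv ^ ((2 * j + 1) * (2 * j) / 2) =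
        qv ^ (j ^ 2 + (n - j) * (n - j - 1)) * qv ^ (n * (2 * j + 1)) := by
      rw [← pow_add, ← pow_add, hexp n j hj']
    have h1 := qFact_ne_zero (2 * j + 1)
    have h2 := qFact_ne_zero (2 * (n - j))
    have hq : qv ^ (n * (2 * j + 1)) ≠ 0 := pow_ne_zero _ qv_ne_zero
    rw [hu]
    field_simp
    linear_combination hpow
  have hkey' : qv ^ (∑ i ∈ range n, (n - i)) * O = P := by
    have h := ff_key n
    rw [ff_odd_part, ← hOdef, ← hPdef] at h
    have h2 : (2 : Fq) ≠ 0 := by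
      rw [← map_ofNat (algebraMap (Polynomial ℚ) (RatFunc ℚ)) 2]
      exact RatFunc.algebraMap_ne_zero (by norm_num)
    apply mul_left_cancel₀ h2
    linear_combination h
  have hnn : qv ^ (n ^ 2) = qv ^ (n * (n - 1) / 2) * qv ^ (∑ i ∈ range n, (n - i)) := by
    rw [← pow_add, harith]
  have hS : S = qv ^ (n * (n - 1) / 2) / qFact qv (2 * n + 1) * P := by
    rw [div_mul_eq_mul_div, eq_div_iff hF]
    linear_combination -hC2 + qv ^ (n * (n - 1) / 2) * hkey' + O * hnn
  rw [hS]
  ring
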